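/- Suppose (X, H) is a hypothesis class with Ldim(H) = d < ∞ and 0 < ε < 1/2. Then for every finite nonempty H' ⊆ H there is A ⊆ H' of size ≥ ε^d·|H'| such that A is both ε-good and Littlestone-opinionated, and these two notions of majority agree: for every a ∈ X and every t ∈ {0,1}, Ldim({h ∈ A : h(a) = t}) = Ldim(A) if and only if |{h ∈ A : h(a) = t}| ≥ (1−ε)|A|. -/

import Mathlib

open scoped Classical

/-- `h` realizes the branch `y` in the binary tree with node labels given by `t`
(the node reached by the bit string `s` is labeled `t s`). -/
def Realizes {X : Type*} (t : List Bool → X) (h : X → Bool) (y : List Bool) : Prop :=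
  ∀ i : Fin y.length, h (t (y.take i)) = y.get i

/-- `H` shatters some complete binary mistake tree of depth `d`. -/
def Shatters {X : Type*} (H : Set (X → Bool)) (d : ℕ) : Prop :=
  ∃ t : List Bool → X, ∀ y : List Bool, y.length = d → ∃ h ∈ H, Realizes t h y

/-- Littlestone dimension: supremum of depths of shattered mistake trees
(`⊥` for the empty class, `⊤` if unbounded). -/
noncomputable def Ldim {X : Type*} (H : Set (X → Bool)) : WithBot ℕ∞ :=
  sSup {d : WithBot ℕ∞ | ∃ n : ℕ, Shatters H n ∧ d = ((n : ℕ∞) : WithBot ℕ∞)}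

/-- A finite set `A` of hypotheses is ε-good: every point `x` splits it ε-unevenly. -/
def EpsGoodH {X : Type*} (ε : ℝ) (A : Finset (X → Bool)) : Prop :=
  ∀ x : X, ((A.filter fun h => h x = true).card : ℝ) < ε * A.card ∨
           ((A.filter fun h => h x = false).card : ℝ) < ε * A.card

/-- A finite set `B ⊆ X` is ε-good w.r.t. the class `H`. -/
def EpsGoodX {X : Type*} (H : Set (X → Bool)) (ε : ℝ) (B : Finset X) : Prop :=
  ∀ h ∈ H, ((B.filter fun b => h b = true).card : ℝ) < ε * B.card ∨
           ((B.filter fun b => h b = false).card : ℝ) < ε * B.card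

/-- `A` is Littlestone-opinionated: for every `a ∈ X` exactly one of the two half-space
pieces of `A` has strictly smaller Littlestone dimension than `A`. -/
def LOpinionated {X : Type*} (A : Finset (X → Bool)) : Prop :=
  ∀ a : X,
    Xor' (Ldim {h | h ∈ A ∧ h a = false} < Ldim (↑A : Set (X → Bool)))
         (Ldim {h | h ∈ A ∧ h a = true} < Ldim (↑A : Set (X → Bool)))

namespace S12

noncomputable def C (n : ℕ) : WithBot ℕ∞ := ((n : ℕ∞) : WithBot ℕ∞)

lemma C_le_C {m n : ℕ} : C m ≤ C n ↔ m ≤ n := by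
  simp [C]

lemma C_lt_C {m n : ℕ} : C m < C n ↔ m < n := by
  simp [C]

lemma C_inj {m n : ℕ} (h : C m = C n) : m = n := by
  simpa [C] using h

variable {X : Type*}

lemma realizes_prefix {t : List Bool → X} {h : X → Bool} {y z : List Bool}
    (hz : Realizes t h (y ++ z)) : Realizes t h y := by
  intro i
  have hlt : (i : ℕ) < (y ++ z).length := by
    simp only [List.length_append]; omega
  have := hz ⟨i, hlt⟩
  rw [List.take_append_of_le_length (le_of_lt i.2)] at this
  simpa [List.getElem_append_left i.2] using this

lemma shatters_mono {H1 H2 : Set (X → Bool)} (hsub : H1 ⊆ H2) {n : ℕ}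
    (h : Shatters H1 n) : Shatters H2 n := by
  obtain ⟨t, ht⟩ := h
  exact ⟨t, fun y hy => by obtain ⟨f, hf, hr⟩ := ht y hy; exact ⟨f, hsub hf, hr⟩⟩

lemma shatters_anti {H : Set (X → Bool)} {m n : ℕ} (hmn : m ≤ n)
    (h : Shatters H n) : Shatters H m := by
  obtain ⟨t, ht⟩ := h
  refine ⟨t, fun y hy => ?_⟩
  obtain ⟨f, hf, hr⟩ := ht (y ++ List.replicate (n - m) false) (by simp [hy]; omega)
  exact ⟨f, hf, realizes_prefix hr⟩

lemma shatters_zero [Nonempty X] {H : Set (X → Bool)} (h : H.Nonempty) : Shatters H 0 := by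
  obtain ⟨f, hf⟩ := h
  refine ⟨fun _ => Classical.arbitrary X, fun y hy => ⟨f, hf, ?_⟩⟩
  intro i; exact absurd i.2 (by simp [hy])

lemma not_shatters_empty {n : ℕ} : ¬ Shatters (∅ : Set (X → Bool)) n := by
  rintro ⟨t, ht⟩
  obtain ⟨f, hf, -⟩ := ht (List.replicate n false) (by simp)
  exact hf

lemma shatters_le_ldim {H : Set (X → Bool)} {n : ℕ} (h : Shatters H n) :
    C n ≤ Ldim H := le_sSup ⟨n, h, rfl⟩

lemma ldim_le {H : Set (X → Bool)} {c : WithBot ℕ∞}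
    (h : ∀ n : ℕ, Shatters H n → C n ≤ c) : Ldim H ≤ c := by
  apply sSup_le
  rintro d ⟨n, hn, rfl⟩
  exact h n hn

lemma ldim_mono {H1 H2 : Set (X → Bool)} (hsub : H1 ⊆ H2) : Ldim H1 ≤ Ldim H2 :=
  ldim_le fun n hn => shatters_le_ldim (shatters_mono hsub hn)

lemma ldim_empty : Ldim (∅ : Set (X → Bool)) = ⊥ := by
  rw [Ldim]
  rw [show {d : WithBot ℕ∞ | ∃ n : ℕ, Shatters (∅ : Set (X → Bool)) n ∧ d = ((n : ℕ∞) : WithBot ℕ∞)} = ∅ from ?_]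
  · exact sSup_empty
  ext d
  simp only [Set.mem_setOf_eq, Set.mem_empty_iff_false, iff_false]
  rintro ⟨n, hn, -⟩
  exact not_shatters_empty hn


lemma exists_ldim_eq [Nonempty X] {S : Set (X → Bool)} (hne : S.Nonempty) {n : ℕ}
    (hb : Ldim S ≤ C n) : ∃ m ≤ n, Ldim S = C m ∧ Shatters S m := by
  have hbd : ∀ k : ℕ, Shatters S k → k ≤ n := fun k hk =>
    C_le_C.mp ((shatters_le_ldim hk).trans hb)
  set m := Nat.findGreatest (Shatters S) n with hm
  have hPm : Shatters S m := Nat.findGreatest_spec (Nat.zero_le n) (shatters_zero hne)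
  refine ⟨m, Nat.findGreatest_le n, le_antisymm (ldim_le fun k hk => ?_) (shatters_le_ldim hPm), hPm⟩
  exact C_le_C.mpr (Nat.le_findGreatest (hbd k hk) hk)

lemma ldim_eq_nat_shatters [Nonempty X] {S : Set (X → Bool)} {k : ℕ}
    (h : Ldim S = C k) : Shatters S k := by
  have hne : S.Nonempty := by
    rcases S.eq_empty_or_nonempty with rfl | hne
    · rw [ldim_empty] at h; exact absurd h.symm (by simp [C])
    · exact hne
  obtain ⟨m, -, hm, hs⟩ := exists_ldim_eq hne (le_of_eq h)
  rwa [C_inj (hm.symm.trans h)] at hs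

lemma shatters_split {S : Set (X → Bool)} {x : X} {k : ℕ}
    (h0 : Shatters {h | h ∈ S ∧ h x = false} k)
    (h1 : Shatters {h | h ∈ S ∧ h x = true} k) : Shatters S (k + 1) := by
  obtain ⟨t0, ht0⟩ := h0
  obtain ⟨t1, ht1⟩ := h1
  refine ⟨fun s => match s with
    | [] => x
    | b :: s => if b then t1 s else t0 s, fun y hy => ?_⟩
  match y, hy with
  | b :: z, hy =>
    have hz : z.length = k := by simpa using hy
    obtain ⟨f, ⟨hfS, hfx⟩, hfr⟩ :
        ∃ f, (f ∈ S ∧ f x = b) ∧ Realizes (if b then t1 else t0) f z := by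
      cases b
      · obtain ⟨f, hf, hr⟩ := ht0 z hz; exact ⟨f, hf, by simpa using hr⟩
      · obtain ⟨f, hf, hr⟩ := ht1 z hz; exact ⟨f, hf, by simpa using hr⟩
    refine ⟨f, hfS, ?_⟩
    intro i
    match i with
    | ⟨0, h0'⟩ => simpa using hfx
    | ⟨j + 1, hj⟩ =>
      have hjz : j < z.length := by simpa using hj
      have := hfr ⟨j, hjz⟩
      cases b <;> simpa using this

lemma filter_card_split (A : Finset (X → Bool)) (x : X) :
    (A.filter fun h => h x = true).card + (A.filter fun h => h x = false).card = A.card := by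
  have e : (A.filter fun h => ¬ h x = true) = A.filter fun h => h x = false := by
    apply Finset.filter_congr; intro h _; simp
  rw [← e, Finset.card_filter_add_card_filter_not]

lemma coe_filter_eq (A : Finset (X → Bool)) (x : X) (t : Bool) :
    {h | h ∈ A ∧ h x = t} ⊆ (↑A : Set (X → Bool)) := fun h hh => hh.1

lemma main_ind [Nonempty X] (ε : ℝ) (hε0 : 0 < ε) (hε1 : ε ≤ 1) :
    ∀ n : ℕ, ∀ A : Finset (X → Bool), A.Nonempty → Ldim (↑A : Set (X → Bool)) ≤ C n →
    ∃ B ⊆ A, B.Nonempty ∧ ε ^ n * A.card ≤ (B.card : ℝ) ∧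
      ∀ (x : X) (t : Bool), ε * B.card ≤ ((B.filter fun h => h x = t).card : ℝ) →
        Ldim {h | h ∈ B ∧ h x = t} = Ldim (↑B : Set (X → Bool)) := by
  intro n
  induction n with
  | zero =>
    intro A hne hb
    refine ⟨A, le_refl _, hne, by simp, fun x t hxt => ?_⟩
    by_contra hne'
    -- Ldim of the piece is < Ldim A ≤ 0, but piece is nonempty so its Ldim ≥ 0
    have hpne : {h | h ∈ A ∧ h x = t}.Nonempty := by
      by_contra hc
      rw [Set.not_nonempty_iff_eq_empty] at hc
      have : (A.filter fun h => h x = t) = ∅ := by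
        ext f; simp only [Finset.mem_filter, Finset.notMem_empty, iff_false]
        intro hf
        exact Set.eq_empty_iff_forall_notMem.mp hc f ⟨hf.1, hf.2⟩
      rw [this] at hxt
      have : (0:ℝ) < ε * A.card := by
        apply mul_pos hε0
        exact_mod_cast Nat.pos_of_ne_zero (fun h => by simp [Finset.card_eq_zero.mp h] at hne)
      simp at hxt
      linarith
    have h0p : C 0 ≤ Ldim {h | h ∈ A ∧ h x = t} := shatters_le_ldim (shatters_zero hpne)
    have h0A : Ldim (↑A : Set (X → Bool)) = C 0 :=
      le_antisymm (by simpa [C] using hb) (shatters_le_ldim (shatters_zero (by simpa using hne)))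
    have hle : Ldim {h | h ∈ A ∧ h x = t} ≤ C 0 := (ldim_mono (coe_filter_eq A x t)).trans hb
    exact hne' ((le_antisymm hle h0p).trans h0A.symm)
  | succ n ih =>
    intro A hne hb
    by_cases hgood : ∀ (x : X) (t : Bool), ε * A.card ≤ ((A.filter fun h => h x = t).card : ℝ) →
        Ldim {h | h ∈ A ∧ h x = t} = Ldim (↑A : Set (X → Bool))
    · refine ⟨A, le_refl _, hne, ?_, hgood⟩
      have : ε ^ (n+1) ≤ 1 := pow_le_one₀ (le_of_lt hε0) hε1
      nlinarith [(Nat.cast_pos (α := ℝ)).mpr (Finset.card_pos.mpr hne)]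
    · push_neg at hgood
      obtain ⟨x, t, hcard, hneq⟩ := hgood
      set A' := A.filter fun h => h x = t with hA'
      have hA'ne : A'.Nonempty := by
        rw [← Finset.card_pos]
        rcases Nat.eq_zero_or_pos A'.card with h | h
        · rw [h] at hcard
          have : (0:ℝ) < ε * A.card :=
            mul_pos hε0 (by exact_mod_cast Finset.card_pos.mpr hne)
          simp at hcard; linarith
        · exact h
      have hsetA' : (↑A' : Set (X → Bool)) = {h | h ∈ A ∧ h x = t} := by
        ext f; simp [hA']
      -- Ldim A' < Ldim A
      have hle' : Ldim (↑A' : Set (X → Bool)) ≤ Ldim (↑A : Set (X → Bool)) :=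
        ldim_mono (Finset.coe_subset.mpr (Finset.filter_subset _ A))
      obtain ⟨m, hmn, hm, -⟩ := exists_ldim_eq (by simpa using hA'ne) (hle'.trans hb)
      obtain ⟨k, hkn, hk, -⟩ := exists_ldim_eq (by simpa using hne) hb
      have hm' : Ldim {h | h ∈ A ∧ h x = t} = C m := by rw [← hsetA']; exact hm
      have hle'' : C m ≤ C k := by
        rw [← hm', ← hk]; exact ldim_mono (coe_filter_eq A x t)
      have hne'' : C m ≠ C k := by rw [← hm', ← hk]; exact hneq
      have hmk : m < k := C_lt_C.mp (lt_of_le_of_ne hle'' hne'')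
      have hmn' : m ≤ n := by omega
      have hbA' : Ldim (↑A' : Set (X → Bool)) ≤ C n := hm.le.trans (C_le_C.mpr hmn')
      obtain ⟨B, hBA', hBne, hBcard, hBgood⟩ := ih A' hA'ne hbA'
      refine ⟨B, hBA'.trans (Finset.filter_subset _ _), hBne, ?_, hBgood⟩
      have h1 : ε ^ n * (A'.card : ℝ) ≤ B.card := hBcard
      have h2 : ε * (A.card : ℝ) ≤ A'.card := hcard
      have hεn : (0:ℝ) < ε ^ n := pow_pos hε0 n
      calc ε ^ (n+1) * A.card = ε ^ n * (ε * A.card) := by ring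
        _ ≤ ε ^ n * A'.card := by nlinarith
        _ ≤ B.card := h1

lemma not_both_eq [Nonempty X] {B : Finset (X → Bool)} {x : X} {k : ℕ}
    (hB : Ldim (↑B : Set (X → Bool)) = C k)
    (h0 : Ldim {h | h ∈ B ∧ h x = false} = Ldim (↑B : Set (X → Bool)))
    (h1 : Ldim {h | h ∈ B ∧ h x = true} = Ldim (↑B : Set (X → Bool))) : False := by
  have s0 : Shatters {h | h ∈ B ∧ h x = false} k := ldim_eq_nat_shatters (h0.trans hB)
  have s1 : Shatters {h | h ∈ B ∧ h x = true} k := ldim_eq_nat_shatters (h1.trans hB)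
  have : C (k + 1) ≤ Ldim (↑B : Set (X → Bool)) :=
    shatters_le_ldim (shatters_split (S := (↑B : Set (X → Bool))) (x := x)
      (by simpa using s0) (by simpa using s1))
  rw [hB] at this
  have := C_le_C.mp this
  omega

lemma key_claim [Nonempty X] (ε : ℝ) (hε0 : 0 < ε) (hε : ε < 1/2) {n : ℕ}
    (B : Finset (X → Bool)) (hBne : B.Nonempty) (hb : Ldim (↑B : Set (X → Bool)) ≤ C n)
    (star : ∀ (x : X) (t : Bool), ε * B.card ≤ ((B.filter fun h => h x = t).card : ℝ) →
      Ldim {h | h ∈ B ∧ h x = t} = Ldim (↑B : Set (X → Bool))) (x : X) :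
    ∃ t : Bool,
      (Ldim {h | h ∈ B ∧ h x = t} = Ldim (↑B : Set (X → Bool)) ∧
        (1 - ε) * B.card ≤ ((B.filter fun h => h x = t).card : ℝ)) ∧
      (Ldim {h | h ∈ B ∧ h x = !t} < Ldim (↑B : Set (X → Bool)) ∧
        ((B.filter fun h => h x = !t).card : ℝ) < ε * B.card) := by
  obtain ⟨k, -, hk, -⟩ := exists_ldim_eq (by simpa using hBne) hb
  have hsum : ((B.filter fun h => h x = true).card : ℝ) +
      ((B.filter fun h => h x = false).card : ℝ) = B.card := by
    exact_mod_cast congrArg (Nat.cast (R := ℝ)) (filter_card_split B x)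
  have hpos : (0:ℝ) < B.card := by exact_mod_cast Finset.card_pos.mpr hBne
  -- some side has ≥ ε|B|
  have hexists : ∃ t : Bool, ε * B.card ≤ ((B.filter fun h => h x = t).card : ℝ) := by
    by_contra hc
    push_neg at hc
    have h1 := hc true
    have h2 := hc false
    nlinarith
  obtain ⟨t0, ht0⟩ := hexists
  have heq0 : Ldim {h | h ∈ B ∧ h x = t0} = Ldim (↑B : Set (X → Bool)) := star x t0 ht0
  -- the other side does not have equal Ldim
  have hneq1 : Ldim {h | h ∈ B ∧ h x = !t0} ≠ Ldim (↑B : Set (X → Bool)) := by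
    intro hcontra
    cases t0
    · exact not_both_eq hk heq0 hcontra
    · exact not_both_eq hk hcontra heq0
  have hlt1 : Ldim {h | h ∈ B ∧ h x = !t0} < Ldim (↑B : Set (X → Bool)) :=
    lt_of_le_of_ne (ldim_mono (coe_filter_eq B x (!t0))) hneq1
  have hsmall : ((B.filter fun h => h x = !t0).card : ℝ) < ε * B.card := by
    by_contra hc
    push_neg at hc
    exact hneq1 (star x (!t0) hc)
  refine ⟨t0, ⟨heq0, ?_⟩, hlt1, hsmall⟩
  cases t0 <;> simp only [Bool.not_false, Bool.not_true] at hsmall <;> linarith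

end S12

open S12 in
/-- if `Ldim(H) = d < ∞` and `0 < ε < 1/2`, every finite nonempty `H' ⊆ H`
has a subset `A` with `|A| ≥ ε^d |H'|` which is ε-good and Littlestone-opinionated, and
on which the counting majority and the Littlestone majority agree. -/
theorem stmt_12 {X : Type*} (H : Set (X → Bool)) (d : ℕ)
    (hd : Ldim H = ((d : ℕ∞) : WithBot ℕ∞))
    (ε : ℝ) (hε0 : 0 < ε) (hε : ε < 1/2) :
    ∀ H' : Finset (X → Bool), ↑H' ⊆ H → H'.Nonempty →
      ∃ A ⊆ H', ε ^ d * H'.card ≤ (A.card : ℝ) ∧ EpsGoodH ε A ∧ LOpinionated A ∧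
        ∀ (a : X) (t : Bool),
          Ldim {h | h ∈ A ∧ h a = t} = Ldim (↑A : Set (X → Bool)) ↔
            (1 - ε) * A.card ≤ ((A.filter fun h => h a = t).card : ℝ) := by
  intro H' hsub hne
  -- X is nonempty
  have hX : Nonempty X := by
    have hset : {c : WithBot ℕ∞ | ∃ n : ℕ, Shatters H n ∧ c = ((n : ℕ∞) : WithBot ℕ∞)}.Nonempty := by
      by_contra hc
      rw [Set.not_nonempty_iff_eq_empty] at hc
      rw [Ldim, hc, sSup_empty] at hd
      exact WithBot.bot_ne_coe hd
    obtain ⟨c, n, ⟨t, -⟩, -⟩ := hset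
    exact ⟨t []⟩
  have hbH' : Ldim (↑H' : Set (X → Bool)) ≤ C d := by
    have h2 : Ldim (↑H' : Set (X → Bool)) ≤ Ldim H := ldim_mono hsub
    rw [hd] at h2
    exact h2
  obtain ⟨B, hBsub, hBne, hBcard, hBstar⟩ :=
    main_ind ε hε0 (by linarith) d H' hne hbH'
  have hb : Ldim (↑B : Set (X → Bool)) ≤ C d :=
    (ldim_mono (Finset.coe_subset.mpr hBsub)).trans hbH'
  have hclaim := key_claim ε hε0 hε B hBne hb hBstar
  refine ⟨B, hBsub, hBcard, ?_, ?_, ?_⟩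
  · -- EpsGoodH
    intro x
    obtain ⟨t, ⟨-, -⟩, -, hsmall⟩ := hclaim x
    cases t
    · left; simpa using hsmall
    · right; simpa using hsmall
  · -- LOpinionated
    intro x
    obtain ⟨t, ⟨heq, -⟩, hlt, -⟩ := hclaim x
    cases t
    · exact Or.inr ⟨by simpa using hlt, by rw [heq]; exact lt_irrefl _⟩
    · exact Or.inl ⟨by simpa using hlt, by rw [heq]; exact lt_irrefl _⟩
  · -- the iff
    intro a t
    obtain ⟨t0, ⟨heq, hbig⟩, hlt, hsmall⟩ := hclaim a
    have hpos : (0:ℝ) < B.card := by exact_mod_cast Finset.card_pos.mpr hBne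
    by_cases ht : t = t0
    · subst ht
      exact ⟨fun _ => hbig, fun _ => heq⟩
    · have ht' : t = !t0 := by cases t <;> cases t0 <;> simp_all
      subst ht'
      constructor
      · intro hcontra
        exact absurd hcontra (ne_of_lt hlt)
      · intro hcontra
        exfalso
        nlinarith
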